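/- Every infinite hypothesis class H ⊆ {0,1}^ℕ of total computable hypotheses that is recursively enumerably representable and satisfies Ldim(H) = 1 has the property that every pair (S, x) with S an H-realizable sample and x ∈ ℕ is an optimally significant input; i.e., all optimal online learners for H agree on all H-realizable inputs. -/

import Mathlib

open Classical

variable {X : Type*}

/-- A hypothesis `h` is consistent with a sample `S`. -/
def Consistent (h : X → Bool) (S : List (X × Bool)) : Prop :=
  ∀ p ∈ S, h p.1 = p.2

/-- A sample is realizable by the class `H`. -/
def Realizable (H : Set (X → Bool)) (S : List (X × Bool)) : Prop :=
  ∃ h ∈ H, Consistent h S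

/-- The version space `H_S`. -/
def VS (H : Set (X → Bool)) (S : List (X × Bool)) : Set (X → Bool) :=
  {h ∈ H | Consistent h S}

/-- `H^{(x,r)}`. -/
def Restrict (H : Set (X → Bool)) (x : X) (r : Bool) : Set (X → Bool) :=
  {h ∈ H | h x = r}

/-- `Shatters H d` holds iff there is a complete binary tree of depth `d` shattered by `H`,
equivalently stated recursively. -/
def Shatters (H : Set (X → Bool)) : ℕ → Prop
  | 0 => H.Nonempty
  | d + 1 => ∃ x : X, Shatters (Restrict H x false) d ∧ Shatters (Restrict H x true) d

/-- Littlestone dimension, with `Ldim ∅ = ⊥` (playing the role of `-1`). -/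
noncomputable def Ldim (H : Set (X → Bool)) : WithBot ℕ∞ :=
  ⨆ d ∈ {d : ℕ | Shatters H d}, ((d : ℕ∞) : WithBot ℕ∞)

def MistakesFrom (A : List (X × Bool) → X → Bool) :
    List (X × Bool) → List (X × Bool) → ℕ
  | _, [] => 0
  | pre, p :: rest =>
      (if A pre p.1 ≠ p.2 then 1 else 0) + MistakesFrom A (pre ++ [p]) rest

/-- Number of mistakes that the online learner `A` makes on the sample `S`. -/
def Mistakes (A : List (X × Bool) → X → Bool) (S : List (X × Bool)) : ℕ :=
  MistakesFrom A [] S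

/-- Mistake bound of `A` with respect to `H`. -/
noncomputable def MB (A : List (X × Bool) → X → Bool) (H : Set (X → Bool)) : ℕ∞ :=
  ⨆ S ∈ {S | Realizable H S}, (Mistakes A S : ℕ∞)

/-- `A` is an optimal online learner for `H`. -/
def IsOptimal (A : List (X × Bool) → X → Bool) (H : Set (X → Bool)) : Prop :=
  MB A H = ⨅ B : List (X × Bool) → X → Bool, MB B H

/-- Post-`S` mistake bound of `A` w.r.t. `H`. -/
noncomputable def PostMB (A : List (X × Bool) → X → Bool) (H : Set (X → Bool))
    (S : List (X × Bool)) : ℕ∞ :=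
  ⨆ S' ∈ {S' | Realizable H (S ++ S')}, ((Mistakes A (S ++ S') - Mistakes A S : ℕ) : ℕ∞)

/-- Optimal post-`S` mistake bound. -/
noncomputable def OptPostMB (H : Set (X → Bool)) (S : List (X × Bool)) : ℕ∞ :=
  ⨅ A : List (X × Bool) → X → Bool, PostMB A H S

/-- `A` is anytime optimal for `H`. -/
def AnytimeOptimal (A : List (X × Bool) → X → Bool) (H : Set (X → Bool)) : Prop :=
  ∀ S, Realizable H S → PostMB A H S = OptPostMB H S
/-- The `e`-th partial computable function in the standard numbering by codes. -/
def phi (e : ℕ) : ℕ →. ℕ :=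
  (Denumerable.ofNat Nat.Partrec.Code e).eval

/-- `φ_e(x)↓`. -/
def phiHalts (e x : ℕ) : Prop := (phi e x).Dom

/-- The {0,1}-valued learner induced by a two-place partial computable function:
it predicts `true` exactly when the output converges to `1`. -/
noncomputable def predOf (A : ℕ → ℕ →. ℕ) : List (ℕ × Bool) → ℕ → Bool :=
  fun S x => if 1 ∈ A (Encodable.encode S) x then true else false

/-- `A` is a computable online learner for `H`: a two-place partial computable function
converging with value in {0,1} on every (encoded `H`-realizable sample, point) pair. -/
def IsCOnlineLearner (A : ℕ → ℕ →. ℕ) (H : Set (ℕ → Bool)) : Prop :=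
  Partrec₂ A ∧
    ∀ S : List (ℕ × Bool), Realizable H S → ∀ x : ℕ,
      ∃ y ∈ A (Encodable.encode S) x, y = 0 ∨ y = 1

/-- `H` is recursively enumerably representable: its (0/1-valued, total) members are
exactly the functions computed by an effectively enumerated sequence of codes. -/
def RER (H : Set (ℕ → Bool)) : Prop :=
  ∃ g : ℕ → ℕ, Computable g ∧
    H = {h | ∃ n : ℕ, ∀ x : ℕ,
      phi (g n) x = Part.some (cond (h x) 1 0)}

section Aux

variable {X : Type*}

lemma consistent_append {h : X → Bool} {S T : List (X × Bool)} :
    Consistent h (S ++ T) ↔ Consistent h S ∧ Consistent h T := by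
  constructor
  · intro hc
    exact ⟨fun p hp => hc p (List.mem_append_left _ hp),
      fun p hp => hc p (List.mem_append_right _ hp)⟩
  · rintro ⟨h1, h2⟩ p hp
    rcases List.mem_append.1 hp with h' | h'
    · exact h1 p h'
    · exact h2 p h'

lemma VS_nil (H : Set (X → Bool)) : VS H [] = H := by
  ext h; simp [VS, Consistent]

lemma VS_append_singleton (H : Set (X → Bool)) (S : List (X × Bool)) (x : X) (r : Bool) :
    VS H (S ++ [(x, r)]) = Restrict (VS H S) x r := by
  ext h
  simp only [VS, Restrict, Set.mem_setOf_eq, consistent_append]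
  constructor
  · rintro ⟨hH, hS, hone⟩
    exact ⟨⟨hH, hS⟩, hone (x, r) (List.mem_singleton_self _)⟩
  · rintro ⟨⟨hH, hS⟩, hx⟩
    refine ⟨hH, hS, ?_⟩
    intro p hp
    rw [List.mem_singleton.1 hp]
    exact hx

lemma realizable_of_append {H : Set (X → Bool)} {S T : List (X × Bool)}
    (hr : Realizable H (S ++ T)) : Realizable H S := by
  obtain ⟨h, hH, hc⟩ := hr
  exact ⟨h, hH, (consistent_append.1 hc).1⟩

lemma vs_nonempty {H : Set (X → Bool)} {S : List (X × Bool)}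
    (hr : Realizable H S) : (VS H S).Nonempty := by
  obtain ⟨h, hH, hc⟩ := hr
  exact ⟨h, hH, hc⟩

lemma realizable_of_vs_mem {H : Set (X → Bool)} {S : List (X × Bool)} {h : X → Bool}
    (hm : h ∈ VS H S) {x : X} : Realizable H (S ++ [(x, h x)]) := by
  refine ⟨h, hm.1, consistent_append.2 ⟨hm.2, ?_⟩⟩
  intro p hp
  rw [List.mem_singleton.1 hp]

lemma restrict_subset (H : Set (X → Bool)) (x : X) (r : Bool) :
    Restrict H x r ⊆ H := fun g hg => hg.1

lemma restrict_mono {V W : Set (X → Bool)} (hVW : V ⊆ W) (x : X) (r : Bool) :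
    Restrict V x r ⊆ Restrict W x r := fun g hg => ⟨hVW hg.1, hg.2⟩

lemma shatters_mono : ∀ {d : ℕ} {V W : Set (X → Bool)}, V ⊆ W →
    Shatters V d → Shatters W d
  | 0, _, _, hVW, h => h.mono hVW
  | d + 1, _, _, hVW, ⟨x, h0, h1⟩ =>
      ⟨x, shatters_mono (restrict_mono hVW x false) h0,
        shatters_mono (restrict_mono hVW x true) h1⟩

lemma shatters_one_of {V : Set (X → Bool)} {g g' : X → Bool}
    (hg : g ∈ V) (hg' : g' ∈ V) (hne : g ≠ g') : Shatters V 1 := by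
  have : ∃ x, g x ≠ g' x := by
    by_contra hx
    push_neg at hx
    exact hne (funext hx)
  obtain ⟨x, hx⟩ := this
  refine ⟨x, ?_, ?_⟩
  · cases hgx : g x
    · exact ⟨g, hg, hgx⟩
    · exact ⟨g', hg', by cases hgx' : g' x <;> simp_all⟩
  · cases hgx : g x
    · exact ⟨g', hg', by cases hgx' : g' x <;> simp_all⟩
    · exact ⟨g, hg, hgx⟩

lemma subsingleton_side {H V : Set (X → Bool)} (h2 : ¬ Shatters H 2)
    (hVH : V ⊆ H) (x : X) :
    (Restrict V x false).Subsingleton ∨ (Restrict V x true).Subsingleton := by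
  by_contra hc
  push_neg at hc
  obtain ⟨hc0, hc1⟩ := hc
  obtain ⟨g0, hg0, g0', hg0', hne0⟩ := hc0
  obtain ⟨g1, hg1, g1', hg1', hne1⟩ := hc1
  exact h2 (shatters_mono hVH
    ⟨x, shatters_one_of hg0 hg0' hne0, shatters_one_of hg1 hg1' hne1⟩)

lemma side_infinite {V : Set (X → Bool)} {x : X} {c : Bool}
    (hV : V.Infinite) (hsub : (Restrict V x c).Subsingleton) :
    (Restrict V x (!c)).Infinite := by
  by_contra hfin
  rw [Set.not_infinite] at hfin
  have hcover : V ⊆ Restrict V x c ∪ Restrict V x (!c) := by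
    intro g hg
    by_cases hgx : g x = c
    · exact Or.inl ⟨hg, hgx⟩
    · exact Or.inr ⟨hg, by cases c <;> cases hgxv : g x <;> simp_all⟩
  exact hV ((hsub.finite.union hfin).subset hcover)

lemma mistakesFrom_append (A : List (X × Bool) → X → Bool) :
    ∀ (l pre : List (X × Bool)) (p : X × Bool),
      MistakesFrom A pre (l ++ [p]) =
        MistakesFrom A pre l + (if A (pre ++ l) p.1 ≠ p.2 then 1 else 0)
  | [], pre, p => by simp [MistakesFrom]
  | q :: l, pre, p => by
      simp only [List.cons_append, MistakesFrom, List.append_eq,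
        mistakesFrom_append A l (pre ++ [q]) p, List.append_assoc,
        List.singleton_append, List.nil_append]
      omega

lemma mistakes_append (A : List (X × Bool) → X → Bool) (S : List (X × Bool))
    (p : X × Bool) :
    Mistakes A (S ++ [p]) = Mistakes A S + (if A S p.1 ≠ p.2 then 1 else 0) := by
  have := mistakesFrom_append A S [] p
  simpa [Mistakes] using this

lemma mistakes_nil (A : List (X × Bool) → X → Bool) : Mistakes A [] = 0 := rfl

end Aux

section Main

variable {X : Type*}

/-- The standard-optimal learner: predict the infinite side of the version space,
otherwise follow the remaining hypothesis. -/
noncomputable def Bstar (H : Set (X → Bool)) : List (X × Bool) → X → Bool :=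
  fun S x =>
    if (Restrict (VS H S) x true).Infinite then true
    else if (Restrict (VS H S) x false).Infinite then false
    else if ∃ g ∈ VS H S, g x = true then true else false

lemma Bstar_spec_inf {H : Set (X → Bool)} {S : List (X × Bool)} {x : X}
    (h2 : ¬ Shatters H 2) {b : Bool}
    (hb : (Restrict (VS H S) x b).Infinite) : Bstar H S x = b := by
  have hnot : ¬ (Restrict (VS H S) x (!b)).Infinite := by
    intro hnb
    rcases subsingleton_side h2 (fun g hg => hg.1 : VS H S ⊆ H) x with hs | hs
    · cases b
      · exact hb.nontrivial.not_subsingleton hs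
      · exact hnb.nontrivial.not_subsingleton hs
    · cases b
      · exact hnb.nontrivial.not_subsingleton hs
      · exact hb.nontrivial.not_subsingleton hs
  cases b
  · simp only [Bstar]
    rw [if_neg (by simpa using hnot), if_pos hb]
  · simp only [Bstar]
    rw [if_pos hb]

lemma Bstar_spec_single {H : Set (X → Bool)} {S : List (X × Bool)} {x : X}
    {h : X → Bool} (hsub : (VS H S).Subsingleton) (hmem : h ∈ VS H S) :
    Bstar H S x = h x := by
  have h1 : ¬ (Restrict (VS H S) x true).Infinite :=
    ((hsub.anti (restrict_subset _ _ _)).finite).not_infinite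
  have h0 : ¬ (Restrict (VS H S) x false).Infinite :=
    ((hsub.anti (restrict_subset _ _ _)).finite).not_infinite
  simp only [Bstar, if_neg h1, if_neg h0]
  cases hx : h x
  · rw [if_neg]
    rintro ⟨g, hg, hgx⟩
    rw [hsub hg hmem] at hgx
    rw [hx] at hgx
    exact Bool.false_ne_true hgx
  · rw [if_pos ⟨h, hmem, hx⟩]

lemma bstar_invariant {H : Set (X → Bool)} (hH : H.Infinite)
    (h2 : ¬ Shatters H 2) :
    ∀ S : List (X × Bool), Realizable H S →
      ((VS H S).Infinite ∧ Mistakes (Bstar H) S = 0) ∨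
      ((VS H S).Subsingleton ∧ Mistakes (Bstar H) S ≤ 1) := by
  intro S
  induction S using List.reverseRecOn with
  | nil => intro _; left; exact ⟨by rw [VS_nil]; exact hH, mistakes_nil _⟩
  | append_singleton S p ih =>
    intro hr
    obtain ⟨x, r⟩ := p
    have hrS : Realizable H S := realizable_of_append hr
    have hmis := mistakes_append (Bstar H) S (x, r)
    rw [VS_append_singleton]
    rcases ih hrS with ⟨hinf, hm0⟩ | ⟨hsub, hm1⟩
    · rcases subsingleton_side h2 (fun g hg => hg.1 : VS H S ⊆ H) x with hs | hs
      · -- false side subsingleton, true side infinite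
        have hbig : (Restrict (VS H S) x true).Infinite := by
          simpa using side_infinite hinf hs
        have hpred : Bstar H S x = true := Bstar_spec_inf h2 hbig
        cases r
        · right
          refine ⟨hs, ?_⟩
          rw [hmis, hm0, hpred]
          simp
        · left
          refine ⟨hbig, ?_⟩
          rw [hmis, hm0, hpred]
          simp
      · have hbig : (Restrict (VS H S) x false).Infinite := by
          simpa using side_infinite hinf hs
        have hpred : Bstar H S x = false := Bstar_spec_inf h2 hbig
        cases r
        · left
          refine ⟨hbig, ?_⟩
          rw [hmis, hm0, hpred]
          simp
        · right
          refine ⟨hs, ?_⟩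
          rw [hmis, hm0, hpred]
          simp
    · obtain ⟨h, hh⟩ := vs_nonempty hr
      rw [VS_append_singleton] at hh
      have hhV : h ∈ VS H S := hh.1
      have hhx : h x = r := hh.2
      have hpred : Bstar H S x = r := by rw [Bstar_spec_single hsub hhV, hhx]
      right
      refine ⟨hsub.anti (restrict_subset _ _ _), ?_⟩
      rw [hmis, hpred]
      simpa using hm1

lemma MB_Bstar_le {H : Set (X → Bool)} (hH : H.Infinite) (h2 : ¬ Shatters H 2) :
    MB (Bstar H) H ≤ 1 := by
  refine iSup₂_le fun S hS => ?_
  have : Mistakes (Bstar H) S ≤ 1 := by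
    rcases bstar_invariant hH h2 S hS with ⟨_, hm⟩ | ⟨_, hm⟩
    · omega
    · exact hm
  exact_mod_cast this

/-- Any learner whose mistake count on realizable samples is at most 1, having made no
mistake yet, must predict into a nontrivial side of the version space. -/
lemma forced_pred {H : Set (X → Bool)} {A : List (X × Bool) → X → Bool}
    (mbA : ∀ S, Realizable H S → Mistakes A S ≤ 1)
    {S : List (X × Bool)} {x : X} {b : Bool}
    (hm0 : Mistakes A S = 0)
    (hbig : (Restrict (VS H S) x b).Nontrivial) : A S x = b := by
  by_contra hne
  have hAx : A S x = !b := by cases hb : A S x <;> cases b <;> simp_all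
  obtain ⟨g, hg, g', hg', hgg⟩ := hbig
  set S2 := S ++ [(x, b)] with hS2
  have hrS2 : Realizable H S2 := ⟨g, hg.1.1, consistent_append.2 ⟨hg.1.2, by
    intro p hp; rw [List.mem_singleton.1 hp]; exact hg.2⟩⟩
  have hm2 : Mistakes A S2 = 1 := by
    rw [hS2, mistakes_append, hm0, hAx]
    cases b <;> simp
  have hdiff : ∃ x', g x' ≠ g' x' := by
    by_contra hx
    push_neg at hx
    exact hgg (funext hx)
  obtain ⟨x', hx'⟩ := hdiff
  set c := A S2 x' with hc
  have : ∃ g'' , g'' ∈ Restrict (VS H S) x b ∧ g'' x' = !c := by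
    by_cases hgc : g x' = !c
    · exact ⟨g, hg, hgc⟩
    · refine ⟨g', hg', ?_⟩
      cases hcv : c <;> cases hgv : g x' <;> cases hgv' : g' x' <;> simp_all
  obtain ⟨g'', hg''V, hg''x⟩ := this
  have hrS3 : Realizable H (S2 ++ [(x', !c)]) := by
    refine ⟨g'', hg''V.1.1, consistent_append.2 ⟨consistent_append.2
      ⟨hg''V.1.2, ?_⟩, ?_⟩⟩
    · intro p hp; rw [List.mem_singleton.1 hp]; exact hg''V.2
    · intro p hp; rw [List.mem_singleton.1 hp]; exact hg''x
  have hm3 : Mistakes A (S2 ++ [(x', !c)]) = 2 := by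
    rw [mistakes_append, hm2, ← hc]
    cases c <;> simp
  have := mbA _ hrS3
  omega

lemma opt_invariant {H : Set (X → Bool)} (hH : H.Infinite) (h2 : ¬ Shatters H 2)
    {A : List (X × Bool) → X → Bool}
    (mbA : ∀ S, Realizable H S → Mistakes A S ≤ 1) :
    ∀ S : List (X × Bool), Realizable H S →
      ((VS H S).Infinite ∧ Mistakes A S = 0) ∨
      ((VS H S).Subsingleton ∧ Mistakes A S = 1) := by
  intro S
  induction S using List.reverseRecOn with
  | nil => intro _; left; exact ⟨by rw [VS_nil]; exact hH, mistakes_nil _⟩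
  | append_singleton S p ih =>
    intro hr
    obtain ⟨x, r⟩ := p
    have hrS : Realizable H S := realizable_of_append hr
    have hmis := mistakes_append A S (x, r)
    rw [VS_append_singleton]
    rcases ih hrS with ⟨hinf, hm0⟩ | ⟨hsub, hm1⟩
    · rcases subsingleton_side h2 (fun g hg => hg.1 : VS H S ⊆ H) x with hs | hs
      · have hbig : (Restrict (VS H S) x true).Infinite := by
          simpa using side_infinite hinf hs
        have hpred : A S x = true := forced_pred mbA hm0 hbig.nontrivial
        cases r
        · right
          refine ⟨hs, ?_⟩
          rw [hmis, hm0, hpred]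
          simp
        · left
          refine ⟨hbig, ?_⟩
          rw [hmis, hm0, hpred]
          simp
      · have hbig : (Restrict (VS H S) x false).Infinite := by
          simpa using side_infinite hinf hs
        have hpred : A S x = false := forced_pred mbA hm0 hbig.nontrivial
        cases r
        · left
          refine ⟨hbig, ?_⟩
          rw [hmis, hm0, hpred]
          simp
        · right
          refine ⟨hs, ?_⟩
          rw [hmis, hm0, hpred]
          simp
    · have hb := mbA _ hr
      rw [hmis, hm1] at hb
      right
      refine ⟨hsub.anti (restrict_subset _ _ _), ?_⟩
      rw [hmis, hm1]
      omega

end Main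

/-- for every infinite RER class of computable hypotheses with
`Ldim(H) = 1`, every realizable input is optimally significant: all optimal online
learners agree on all `H`-realizable inputs. -/
theorem stmt11 (H : Set (ℕ → Bool)) (hinf : H.Infinite)
    (hcomp : ∀ h ∈ H, Computable h) (hrer : RER H)
    (hld : Ldim H = ((1 : ℕ∞) : WithBot ℕ∞)) :
    ∀ (S : List (ℕ × Bool)) (x : ℕ), Realizable H S →
      ∀ A A' : List (ℕ × Bool) → ℕ → Bool,
        IsOptimal A H → IsOptimal A' H → A S x = A' S x := by
  intro S x hS A A' hA hA'
  have h2 : ¬ Shatters H 2 := by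
    intro hs
    have hle : (((2 : ℕ) : ℕ∞) : WithBot ℕ∞) ≤ Ldim H :=
      le_iSup₂ (f := fun (d : ℕ) (_ : d ∈ {d : ℕ | Shatters H d}) =>
        ((d : ℕ∞) : WithBot ℕ∞)) 2 hs
    rw [hld] at hle
    have h21 : ((2 : ℕ) : ℕ∞) ≤ (1 : ℕ∞) := WithBot.coe_le_coe.1 hle
    have : (2 : ℕ) ≤ 1 := by exact_mod_cast h21
    omega
  have hBle := MB_Bstar_le hinf h2
  have mbound : ∀ B : List (ℕ × Bool) → ℕ → Bool, IsOptimal B H →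
      ∀ T, Realizable H T → Mistakes B T ≤ 1 := by
    intro B hB T hT
    have h1 : MB B H ≤ 1 := by
      rw [hB]
      exact le_trans (iInf_le _ (Bstar H)) hBle
    have hsup : (Mistakes B T : ℕ∞) ≤ MB B H :=
      le_iSup₂ (f := fun T (_ : T ∈ {S | Realizable H S}) =>
        ((Mistakes B T : ℕ∞))) T hT
    exact_mod_cast le_trans hsup h1
  have mbA := mbound A hA
  have mbA' := mbound A' hA'
  rcases opt_invariant hinf h2 mbA S hS with ⟨hinfV, hm0⟩ | ⟨hsub, hm1⟩
  · rcases opt_invariant hinf h2 mbA' S hS with ⟨_, hm0'⟩ | ⟨hsub', _⟩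
    · rcases subsingleton_side h2 (fun g hg => hg.1 : VS H S ⊆ H) x with hs | hs
      · have hbig := side_infinite hinfV hs
        simp only [Bool.not_false] at hbig
        rw [forced_pred mbA hm0 hbig.nontrivial,
          forced_pred mbA' hm0' hbig.nontrivial]
      · have hbig := side_infinite hinfV hs
        simp only [Bool.not_true] at hbig
        rw [forced_pred mbA hm0 hbig.nontrivial,
          forced_pred mbA' hm0' hbig.nontrivial]
    · exact absurd hsub' hinfV.nontrivial.not_subsingleton
  · rcases opt_invariant hinf h2 mbA' S hS with ⟨hinfV', _⟩ | ⟨_, hm1'⟩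
    · exact absurd hsub hinfV'.nontrivial.not_subsingleton
    · obtain ⟨h, hh⟩ := vs_nonempty hS
      have key : ∀ B : List (ℕ × Bool) → ℕ → Bool, Mistakes B S = 1 →
          (∀ T, Realizable H T → Mistakes B T ≤ 1) → B S x = h x := by
        intro B hB mbB
        by_contra hne
        have hr2 : Realizable H (S ++ [(x, h x)]) := realizable_of_vs_mem hh
        have hle := mbB _ hr2
        rw [mistakes_append, hB, if_pos hne] at hle
        omega
      rw [key A hm1 mbA, key A' hm1' mbA']
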